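/- Let n ≥ 1 and let M be an invertible real n×n matrix. There exists a symmetric positive definite matrix P with M P⁻¹ Mᵀ = P if and only if there exists a symmetric positive definite matrix Q with (M M^{−T}) Q (M M^{−T})ᵀ = Q, where M^{−T} = (Mᵀ)⁻¹ (i.e., Γ_{M M^{−T}} has a positive definite fixed point). -/

import Mathlib

open Matrix
open scoped MatrixOrder

section Aux

variable {m : Type*} [Fintype m] [DecidableEq m]

private lemma aux_posDef_conjT {A B : Matrix m m ℝ} (hA : A.PosDef) (hB : IsUnit B) :
    (Bᵀ * A * B).PosDef := by
  refine posDef_iff_dotProduct_mulVec.mpr ⟨?_, fun x hx => ?_⟩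
  · have := isHermitian_conjTranspose_mul_mul B hA.1
    rwa [conjTranspose_eq_transpose_of_trivial] at this
  · have hx' : B *ᵥ x ≠ 0 := fun h =>
      hx (((Matrix.mulVec_injective_iff_isUnit.mpr hB).eq_iff' (mulVec_zero B)).mp h)
    have := hA.dotProduct_mulVec_pos hx'
    simpa only [star_mulVec, conjTranspose_eq_transpose_of_trivial, dotProduct_mulVec,
      vecMul_vecMul, Matrix.mul_assoc] using this

private lemma aux_posDef_conj {A B : Matrix m m ℝ} (hA : A.PosDef) (hB : IsUnit B) :
    (B * A * Bᵀ).PosDef := by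
  have := aux_posDef_conjT hA ((Matrix.isUnit_transpose (A := B)).mpr hB)
  rwa [transpose_transpose] at this

private lemma aux_posDef_of_psd {A : Matrix m m ℝ} (hA : A.PosSemidef) (h : IsUnit A) :
    A.PosDef := by
  refine posDef_iff_dotProduct_mulVec.mpr ⟨hA.1, fun x hx => ?_⟩
  have h0 : A *ᵥ x ≠ 0 := fun hz =>
    hx (((Matrix.mulVec_injective_iff_isUnit.mpr h).eq_iff' (mulVec_zero A)).mp hz)
  rcases (hA.dotProduct_mulVec_nonneg x).lt_or_eq with hlt | heq
  · exact hlt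
  · exact absurd ((hA.dotProduct_mulVec_zero_iff x).mp heq.symm) h0

private lemma aux_sqrt_posDef {A : Matrix m m ℝ} (hA : A.PosDef) :
    (CFC.sqrt A).PosDef := by
  refine aux_posDef_of_psd (CFC.sqrt_nonneg A).posSemidef ?_
  have h2 : CFC.sqrt A * CFC.sqrt A = A := CFC.sqrt_mul_sqrt_self A hA.posSemidef.nonneg
  have hd : IsUnit ((CFC.sqrt A).det * (CFC.sqrt A).det) := by
    rw [← det_mul, h2]
    exact hA.isUnit.map detMonoidHom
  exact (isUnit_iff_isUnit_det _).mpr (isUnit_of_mul_isUnit_left hd)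

end Aux

theorem stmt_12 (n : ℕ) (hn : 1 ≤ n) (M : Matrix (Fin n) (Fin n) ℝ) (hM : IsUnit M) :
    (∃ P : Matrix (Fin n) (Fin n) ℝ, P.PosDef ∧ M * P⁻¹ * Mᵀ = P) ↔
      (∃ Q : Matrix (Fin n) (Fin n) ℝ, Q.PosDef ∧
        (M * (Mᵀ)⁻¹) * Q * (M * (Mᵀ)⁻¹)ᵀ = Q) := by
  have hMd : IsUnit M.det := (isUnit_iff_isUnit_det M).mp hM
  have hMtd : IsUnit Mᵀ.det := by rwa [det_transpose]
  constructor
  · rintro ⟨P, hP, hfix⟩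
    refine ⟨P, hP, ?_⟩
    have hPd : IsUnit P.det := hP.isUnit.map detMonoidHom
    have hPinv : P⁻¹ = Mᵀ⁻¹ * P * M⁻¹ := by
      conv_lhs => rw [← hfix]
      rw [Matrix.mul_inv_rev, Matrix.mul_inv_rev, nonsing_inv_nonsing_inv _ hPd,
        Matrix.mul_assoc]
    have : M * (Mᵀ⁻¹ * P * M⁻¹) * Mᵀ = P := by rw [← hPinv]; exact hfix
    rw [transpose_mul, transpose_nonsing_inv, transpose_transpose]
    calc M * Mᵀ⁻¹ * P * (M⁻¹ * Mᵀ) = M * (Mᵀ⁻¹ * P * M⁻¹) * Mᵀ := by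
          simp only [Matrix.mul_assoc]
      _ = P := this
  · rintro ⟨Q, hQ, hfixQ⟩
    have hQd : IsUnit Q.det := hQ.isUnit.map detMonoidHom
    -- R = sqrt Q
    set R : Matrix (Fin n) (Fin n) ℝ := CFC.sqrt Q with hRdef
    have hR : R.PosDef := aux_sqrt_posDef hQ
    have hRR : R * R = Q := CFC.sqrt_mul_sqrt_self Q hQ.posSemidef.nonneg
    have hRs : Rᵀ = R := by
      have := (CFC.sqrt_nonneg Q).posSemidef.1
      rwa [IsHermitian, conjTranspose_eq_transpose_of_trivial] at this
    have hRu : IsUnit R := hR.isUnit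
    have hRd : IsUnit R.det := hR.isUnit.map detMonoidHom
    have hRis : (R⁻¹)ᵀ = R⁻¹ := by rw [transpose_nonsing_inv, hRs]
    -- B = R⁻¹ * M * R⁻¹
    set B : Matrix (Fin n) (Fin n) ℝ := R⁻¹ * M * R⁻¹ with hBdef
    have hBu : IsUnit B := ((Matrix.isUnit_nonsing_inv_iff.mpr hRu).mul hM).mul
      (Matrix.isUnit_nonsing_inv_iff.mpr hRu)
    have hBt : Bᵀ = R⁻¹ * Mᵀ * R⁻¹ := by
      rw [hBdef, transpose_mul, transpose_mul, hRis, Matrix.mul_assoc]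
    have hQinv : R⁻¹ * R⁻¹ = Q⁻¹ := by rw [← Matrix.mul_inv_rev, hRR]
    -- the key consequence of the hypothesis on Q : M * Q⁻¹ * Mᵀ = Mᵀ * Q⁻¹ * M
    have h1 : M * Q⁻¹ * Mᵀ = Mᵀ * Q⁻¹ * M := by
      have h2 : M * Mᵀ⁻¹ * Q * (M⁻¹ * Mᵀ) = Q := by
        rw [transpose_mul, transpose_nonsing_inv, transpose_transpose] at hfixQ
        exact hfixQ
      -- invert both sides
      have h3 : Mᵀ⁻¹ * M * (Q⁻¹ * (Mᵀ * M⁻¹)) = Q⁻¹ := by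
        conv_rhs => rw [← h2]
        rw [Matrix.mul_inv_rev, Matrix.mul_inv_rev, Matrix.mul_inv_rev, Matrix.mul_inv_rev,
          nonsing_inv_nonsing_inv _ hMd, nonsing_inv_nonsing_inv _ hMtd]
        try simp only [Matrix.mul_assoc]
      -- multiply left by Mᵀ and right by M
      have h4 : Mᵀ * (Mᵀ⁻¹ * M * (Q⁻¹ * (Mᵀ * M⁻¹))) * M = Mᵀ * Q⁻¹ * M := by rw [h3]
      calc M * Q⁻¹ * Mᵀ
          = Mᵀ * (Mᵀ⁻¹ * M * (Q⁻¹ * (Mᵀ * M⁻¹))) * M := by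
            rw [Matrix.mul_assoc Mᵀ⁻¹ M, Matrix.mul_nonsing_inv_cancel_left _ _ hMtd]
            simp only [Matrix.mul_assoc, Matrix.nonsing_inv_mul_cancel_right _ _ hMd]
        _ = Mᵀ * Q⁻¹ * M := h4
    -- B is normal
    have hnorm : B * Bᵀ = Bᵀ * B := by
      rw [hBt, hBdef]
      calc R⁻¹ * M * R⁻¹ * (R⁻¹ * Mᵀ * R⁻¹)
          = R⁻¹ * (M * Q⁻¹ * Mᵀ) * R⁻¹ := by
            simp only [← hQinv, Matrix.mul_assoc]
        _ = R⁻¹ * (Mᵀ * Q⁻¹ * M) * R⁻¹ := by rw [h1]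
        _ = R⁻¹ * Mᵀ * R⁻¹ * (R⁻¹ * M * R⁻¹) := by
            simp only [← hQinv, Matrix.mul_assoc]
    -- G = B * Bᵀ, V = sqrt G
    have hGpd : (B * Bᵀ).PosDef := by
      have := aux_posDef_conj (A := (1 : Matrix (Fin n) (Fin n) ℝ)) Matrix.PosDef.one hBu
      rwa [Matrix.mul_one] at this
    set V : Matrix (Fin n) (Fin n) ℝ := CFC.sqrt (B * Bᵀ) with hVdef
    have hV : V.PosDef := aux_sqrt_posDef hGpd
    have hVV : V * V = B * Bᵀ := CFC.sqrt_mul_sqrt_self (B * Bᵀ) hGpd.posSemidef.nonneg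
    have hVs : Vᵀ = V := by
      have := (CFC.sqrt_nonneg (B * Bᵀ)).posSemidef.1
      rwa [IsHermitian, conjTranspose_eq_transpose_of_trivial] at this
    have hVd : IsUnit V.det := hV.isUnit.map detMonoidHom
    have hVis : (V⁻¹)ᵀ = V⁻¹ := by rw [transpose_nonsing_inv, hVs]
    -- key identity : B * V⁻¹ * Bᵀ = V
    have hkey : B * V⁻¹ * Bᵀ = V := by
      have hW : (B * V⁻¹ * Bᵀ).PosSemidef := (aux_posDef_conj hV.inv hBu).posSemidef
      refine (CFC.sqrt_sq _ hW.nonneg).symm.trans ((congrArg CFC.sqrt ?_).trans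
        (CFC.sqrt_sq _ hV.posSemidef.nonneg))
      have hsq : (B * V⁻¹ * Bᵀ) * (B * V⁻¹ * Bᵀ) = V * V := by
        calc (B * V⁻¹ * Bᵀ) * (B * V⁻¹ * Bᵀ)
            = B * (V⁻¹ * ((Bᵀ * B) * V⁻¹)) * Bᵀ := by simp only [Matrix.mul_assoc]
          _ = B * (V⁻¹ * ((V * V) * V⁻¹)) * Bᵀ := by rw [← hnorm, ← hVV]
          _ = B * Bᵀ := by
              rw [Matrix.mul_nonsing_inv_cancel_right _ _ hVd,
                Matrix.nonsing_inv_mul _ hVd, Matrix.mul_one]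
          _ = V * V := hVV.symm
      rw [pow_two, pow_two, hsq]
    -- P = R * V * R
    refine ⟨R * V * R, ?_, ?_⟩
    · have := aux_posDef_conj hV hRu
      rwa [hRs] at this
    · have hPinv : (R * V * R)⁻¹ = R⁻¹ * V⁻¹ * R⁻¹ := by
        rw [Matrix.mul_inv_rev, Matrix.mul_inv_rev, Matrix.mul_assoc]
      rw [hPinv]
      have hMR : M * R⁻¹ = R * B := by
        rw [hBdef, ← Matrix.mul_assoc, Matrix.mul_nonsing_inv_cancel_left _ _ hRd]
      have hRM : R⁻¹ * Mᵀ = Bᵀ * R := by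
        rw [hBt, Matrix.mul_assoc, Matrix.nonsing_inv_mul _ hRd, Matrix.mul_one]
      calc M * (R⁻¹ * V⁻¹ * R⁻¹) * Mᵀ
          = (M * R⁻¹) * V⁻¹ * (R⁻¹ * Mᵀ) := by simp only [Matrix.mul_assoc]
        _ = (R * B) * V⁻¹ * (Bᵀ * R) := by rw [hMR, hRM]
        _ = R * (B * V⁻¹ * Bᵀ) * R := by simp only [Matrix.mul_assoc]
        _ = R * V * R := by rw [hkey]
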